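/- The diagonal Gram entries: for the a non-intersecting walk model, A_{nn} = C_n(a,b,c)^{-1} where C_n(a,b,c) = (a+b−1)!(a+c−1)!(2a+b+c−2n−1)·(a!)² / (n!(2a+b+c−n−1)!), and consequently det A = ∏_{n=0}^{a−1} n!(2a+b+c−n−1)! / ((a+b−1)!(a+c−1)!(2a+b+c−2n−1)(a!)²). -/

import Mathlib

open Finset

/-- The Pochhammer symbol `(a)_n = a(a+1)⋯(a+n-1)` for a real argument. -/
noncomputable def poch (a : ℝ) (n : ℕ) : ℝ := ∏ i ∈ Finset.range n, (a + i)

/-- `1/k!` for an integer `k`, with the convention `1/k! = 0` for `k < 0`. -/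
noncomputable def invfact (k : ℤ) : ℝ :=
  if 0 ≤ k then ((Nat.factorial k.toNat : ℕ) : ℝ)⁻¹ else 0

/-- The single step transition kernel `φ(x,y) = δ_{x-1,y} + δ_{x+1,y}`. -/
noncomputable def walkStep (x y : ℤ) : ℝ :=
  (if x - 1 = y then 1 else 0) + (if x + 1 = y then 1 else 0)

/-- The `n`-fold convolution `φ^{*n}` of the step kernel, with `φ^{*0} = δ`. -/
noncomputable def walkConv : ℕ → ℤ → ℤ → ℝ
  | 0 => fun x y => if x = y then 1 else 0
  | n + 1 => fun x y => ∑' z : ℤ, walkConv n x z * walkStep z y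

/-- The function `ψ(n,z)` of (3.18). -/
noncomputable def psiFun (a b c n : ℕ) (z : ℤ) : ℝ :=
  if Odd z then
    ∑ j ∈ Finset.range (n + 1),
      (n.choose j : ℝ) * poch ((n : ℝ) - 2 * a - b - c + 1) j /
          (poch (-(a : ℝ) - c + 1) j * poch (-(a : ℝ)) j) *
        invfact ((z + 1) / 2 - j) * invfact ((a : ℤ) - (z + 1) / 2)
  else 0

/-- The function `ψ*(n,w)` of (3.19), so that `ψ*(n, c-b+z)` is given by the
same sum with `b` and `c` interchanged. -/
noncomputable def psiStarFun (a b c n : ℕ) (w : ℤ) : ℝ :=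
  psiFun a c b n (w - ((c : ℤ) - b))

/-- The Gram matrix `A_{nm} = ∑_{z,w} ψ(n,z) φ^{*(b+c-2)}(z,w) ψ*(m,w)`. -/
noncomputable def gramA (a b c : ℕ) : Matrix (Fin a) (Fin a) ℝ :=
  Matrix.of fun n m : Fin a =>
    ∑' z : ℤ, ∑' w : ℤ,
      psiFun a b c n z * walkConv (b + c - 2) z w * psiStarFun a b c m w

/-- The constant `C_n(a,b,c)` of (3.27). -/
noncomputable def hahnC (a b c n : ℕ) : ℝ :=
  ((Nat.factorial (a + b - 1) : ℝ) * (Nat.factorial (a + c - 1) : ℝ) *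
      ((2 * a + b + c - 2 * n - 1 : ℕ) : ℝ) * ((Nat.factorial a : ℝ)) ^ 2) /
    ((Nat.factorial n : ℝ) * (Nat.factorial (2 * a + b + c - n - 1) : ℝ))

section binomAux

variable {R : Type*} [CommRing R]

lemma binom_split (f : ℕ → R) (n : ℕ) :
    ∑ j ∈ range (n + 2), ((n + 1).choose j : R) * f j
      = ∑ j ∈ range (n + 1), (n.choose j : R) * f j
        + ∑ j ∈ range (n + 1), (n.choose j : R) * f (j + 1) := by
  rw [Finset.sum_range_succ' (fun j => ((n + 1).choose j : R) * f j)]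
  have h1 : ∀ j, ((n + 1).choose (j + 1) : R) = (n.choose j : R) + (n.choose (j + 1) : R) := by
    intro j
    rw [Nat.choose_succ_succ]
    push_cast
    ring
  simp only [h1, add_mul]
  rw [Finset.sum_add_distrib]
  have h2 : ∑ j ∈ range (n + 1), (n.choose j : R) * f j
      = (n.choose 0 : R) * f 0 + ∑ j ∈ range n, (n.choose (j + 1) : R) * f (j + 1) := by
    rw [Finset.sum_range_succ' (fun j => (n.choose j : R) * f j)]
    ring
  have h3 : ∑ j ∈ range (n + 1), (n.choose (j + 1) : R) * f (j + 1)
      = ∑ j ∈ range n, (n.choose (j + 1) : R) * f (j + 1) := by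
    rw [Finset.sum_range_succ, Nat.choose_succ_self]
    push_cast
    ring
  rw [h3, h2]
  simp [Nat.choose_zero_right]
  ring

end binomAux

/-- Alternating binomial sum against a lower-degree binomial vanishes. -/
lemma alt_choose_vanish :
    ∀ (n : ℕ), ∀ (M r : ℕ), r < n → n ≤ M →
      ∑ j ∈ range (n + 1), (-1 : ℤ) ^ j * (n.choose j : ℤ) * (((M - j).choose r : ℕ) : ℤ) = 0 := by
  intro n
  induction n with
  | zero => intro M r hr; omega
  | succ n ih =>
    intro M r hr hM
    have key : ∑ j ∈ range (n + 2), ((n + 1).choose j : ℤ) * ((-1) ^ j * (((M - j).choose r : ℕ) : ℤ))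
        = ∑ j ∈ range (n + 1), (n.choose j : ℤ) * ((-1) ^ j * (((M - j).choose r : ℕ) : ℤ))
          + ∑ j ∈ range (n + 1), (n.choose j : ℤ) * ((-1) ^ (j+1) * (((M - (j+1)).choose r : ℕ) : ℤ)) :=
      binom_split (fun j => (-1) ^ j * (((M - j).choose r : ℕ) : ℤ)) n
    rcases Nat.eq_zero_or_pos r with hr0 | hrpos
    · subst hr0
      simp only [Nat.choose_zero_right, Nat.cast_one, mul_one]
      exact Int.alternating_sum_range_choose_of_ne (by omega)
    · -- r ≥ 1 case
      obtain ⟨r', rfl⟩ : ∃ r', r = r' + 1 := ⟨r - 1, by omega⟩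
      have expand : ∑ j ∈ range (n + 2), (-1:ℤ) ^ j * ((n+1).choose j : ℤ) * (((M - j).choose (r'+1) : ℕ) : ℤ)
          = ∑ j ∈ range (n + 1), (-1:ℤ) ^ j * (n.choose j : ℤ) *
              ((((M - j).choose (r'+1) : ℕ) : ℤ) - (((M - 1 - j).choose (r'+1) : ℕ) : ℤ)) := by
        rw [show ∀ (s : Finset ℕ) (f : ℕ → ℤ), ∑ j ∈ s, f j = ∑ j ∈ s, f j from fun _ _ => rfl]
        calc ∑ j ∈ range (n + 2), (-1:ℤ) ^ j * ((n+1).choose j : ℤ) * (((M - j).choose (r'+1) : ℕ) : ℤ)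
            = ∑ j ∈ range (n + 2), ((n + 1).choose j : ℤ) * ((-1) ^ j * (((M - j).choose (r'+1) : ℕ) : ℤ)) := by
              apply Finset.sum_congr rfl; intro j hj; ring
          _ = ∑ j ∈ range (n + 1), (n.choose j : ℤ) * ((-1) ^ j * (((M - j).choose (r'+1) : ℕ) : ℤ))
              + ∑ j ∈ range (n + 1), (n.choose j : ℤ) * ((-1) ^ (j+1) * (((M - (j+1)).choose (r'+1) : ℕ) : ℤ)) :=
              binom_split _ n
          _ = ∑ j ∈ range (n + 1), (-1:ℤ) ^ j * (n.choose j : ℤ) *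
              ((((M - j).choose (r'+1) : ℕ) : ℤ) - (((M - 1 - j).choose (r'+1) : ℕ) : ℤ)) := by
              rw [← Finset.sum_add_distrib]
              apply Finset.sum_congr rfl
              intro j hj
              have : M - (j + 1) = M - 1 - j := by omega
              rw [this]
              ring
      rw [expand]
      have step : ∀ j ∈ range (n + 1),
          (-1:ℤ) ^ j * (n.choose j : ℤ) *
              ((((M - j).choose (r'+1) : ℕ) : ℤ) - (((M - 1 - j).choose (r'+1) : ℕ) : ℤ))
            = (-1:ℤ) ^ j * (n.choose j : ℤ) * (((M - 1 - j).choose r' : ℕ) : ℤ) := by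
        intro j hj
        simp only [Finset.mem_range] at hj
        have hMj : M - j = (M - 1 - j) + 1 := by omega
        rw [hMj, Nat.choose_succ_succ]
        push_cast
        ring
      rw [Finset.sum_congr rfl step]
      exact ih (M - 1) r' (by omega) (by omega)

/-- Diagonal alternating sum value. -/
lemma alt_diag_value :
    ∀ (n : ℕ), ∀ (Q : ℕ), n + 1 ≤ Q →
      ∑ j ∈ range (n + 1), (-1 : ℤ) ^ j * (n.choose j : ℤ) * (Q.descFactorial j : ℤ) * ((Q - 1 - j).factorial : ℤ)
        = (-1) ^ n * (n.factorial : ℤ) * ((Q - 1 - n).factorial : ℤ) := by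
  intro n
  induction n with
  | zero => intro Q hQ; simp
  | succ n ih =>
    intro Q hQ
    have expand : ∑ j ∈ range (n + 2), (-1:ℤ) ^ j * ((n+1).choose j : ℤ) * (Q.descFactorial j : ℤ) * ((Q - 1 - j).factorial : ℤ)
        = ∑ j ∈ range (n + 1), (-1:ℤ) ^ j * (n.choose j : ℤ) * (Q.descFactorial j : ℤ) * ((Q - 1 - j).factorial : ℤ)
          - (Q : ℤ) * ∑ j ∈ range (n + 1), (-1:ℤ) ^ j * (n.choose j : ℤ) * ((Q-1).descFactorial j : ℤ) * ((Q - 2 - j).factorial : ℤ) := by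
      calc ∑ j ∈ range (n + 2), (-1:ℤ) ^ j * ((n+1).choose j : ℤ) * (Q.descFactorial j : ℤ) * ((Q - 1 - j).factorial : ℤ)
          = ∑ j ∈ range (n + 2), ((n + 1).choose j : ℤ) * ((-1) ^ j * (Q.descFactorial j : ℤ) * ((Q - 1 - j).factorial : ℤ)) := by
            apply Finset.sum_congr rfl; intro j hj; ring
        _ = ∑ j ∈ range (n + 1), (n.choose j : ℤ) * ((-1) ^ j * (Q.descFactorial j : ℤ) * ((Q - 1 - j).factorial : ℤ))
            + ∑ j ∈ range (n + 1), (n.choose j : ℤ) * ((-1) ^ (j+1) * (Q.descFactorial (j+1) : ℤ) * ((Q - 1 - (j+1)).factorial : ℤ)) :=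
            binom_split _ n
        _ = _ := by
            rw [← Finset.sum_add_distrib, Finset.mul_sum, ← Finset.sum_sub_distrib]
            apply Finset.sum_congr rfl
            intro j hj
            have hdF : Q.descFactorial (j+1) = Q * (Q-1).descFactorial j := by
              obtain ⟨Q', rfl⟩ : ∃ Q', Q = Q' + 1 := ⟨Q - 1, by omega⟩
              rw [Nat.descFactorial_succ]
              exact Nat.succ_descFactorial Q' j
            have h6 : Q - 1 - (j + 1) = Q - 2 - j := by omega
            rw [hdF, h6]
            push_cast
            ring
    have ih2 := ih (Q-1) (by omega)
    have h0 : Q - 1 - 1 = Q - 2 := by omega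
    simp only [h0] at ih2
    rw [expand, ih Q (by omega), ih2]
    have h2 : (Q - 1 - n).factorial = (Q - 1 - n) * (Q - 2 - n).factorial := by
      have : Q - 1 - n = (Q - 2 - n) + 1 := by omega
      rw [this, Nat.factorial_succ]
    rw [h2]
    have h3 : ((Q - 1 - n : ℕ) : ℤ) = (Q : ℤ) - 1 - n := by
      have : n + 1 ≤ Q - 1 := by omega
      push_cast [Nat.cast_sub]
      omega
    have h4 : Q - 1 - (n + 1) = Q - 2 - n := by omega
    rw [h4, Nat.factorial_succ]
    push_cast [h3]
    ring

/-- Binomial coefficient with integer lower index. -/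
noncomputable def zch (p : ℕ) (k : ℤ) : ℝ := if 0 ≤ k then (p.choose k.toNat : ℝ) else 0

lemma zch_natCast (p k : ℕ) : zch p (k : ℤ) = (p.choose k : ℝ) := by
  simp [zch]

lemma zch_neg {p : ℕ} {k : ℤ} (h : k < 0) : zch p k = 0 := by
  simp [zch, not_le.mpr h]

lemma zch_eq_zero_of_gt {p : ℕ} {k : ℤ} (h : (p : ℤ) < k) : zch p k = 0 := by
  unfold zch
  rw [if_pos (by omega)]
  rw [Nat.choose_eq_zero_of_lt (by omega)]
  simp

lemma zch_pascal (p : ℕ) (k : ℤ) : zch p (k - 1) + zch p k = zch (p + 1) k := by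
  rcases lt_trichotomy k 0 with h | h | h
  · rw [zch_neg (by omega), zch_neg h, zch_neg h, add_zero]
  · subst h
    rw [zch_neg (by omega)]
    simp [zch]
  · obtain ⟨t, rfl⟩ : ∃ t : ℕ, k = (t : ℤ) + 1 := ⟨(k - 1).toNat, by omega⟩
    rw [show ((t : ℤ) + 1) - 1 = (t : ℤ) from by ring]
    rw [show ((t : ℤ) + 1) = ((t + 1 : ℕ) : ℤ) from by push_cast; ring]
    rw [zch_natCast, zch_natCast, zch_natCast]
    rw [Nat.choose_succ_succ]
    push_cast
    ring

lemma zch_symm (p : ℕ) (k : ℤ) : zch p k = zch p ((p : ℤ) - k) := by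
  rcases lt_trichotomy k 0 with h | h | h
  · rw [zch_neg h, zch_eq_zero_of_gt (by omega)]
  · subst h; simp [zch]
  · rcases le_or_gt k (p : ℤ) with h2 | h2
    · obtain ⟨t, rfl⟩ : ∃ t : ℕ, k = (t : ℤ) := ⟨k.toNat, by omega⟩
      have ht : t ≤ p := by exact_mod_cast h2
      rw [show (p : ℤ) - t = ((p - t : ℕ) : ℤ) from by push_cast [Nat.cast_sub ht]; ring]
      rw [zch_natCast, zch_natCast, Nat.choose_symm ht]
    · rw [zch_eq_zero_of_gt h2, zch_neg (by omega)]

lemma zch_vandermonde (q p : ℕ) : ∀ v : ℤ,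
    ∑ k ∈ range (q + 1), (q.choose k : ℝ) * zch p (v - k) = zch (p + q) v := by
  induction q with
  | zero => intro v; simp
  | succ q ih =>
    intro v
    have h := binom_split (R := ℝ) (fun k => zch p (v - k)) q
    rw [h, ih v]
    have h2 : ∑ k ∈ range (q + 1), (q.choose k : ℝ) * zch p (v - ((k + 1 : ℕ) : ℤ))
        = zch (p + q) (v - 1) := by
      rw [← ih (v - 1)]
      apply Finset.sum_congr rfl
      intro k _
      congr 1
      push_cast
      ring
    rw [h2, add_comm (zch (p+q) v), zch_pascal, Nat.add_assoc]

/-- Shifted Vandermonde over a large range. -/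
lemma zch_vandermonde' (p q : ℕ) (v : ℤ) (i R : ℕ) (hR : i + q < R) :
    ∑ t ∈ range R, zch p (v - t) * zch q ((t : ℤ) - i) = zch (p + q) (v - i) := by
  have hsplit : ∑ t ∈ range R, zch p (v - t) * zch q ((t : ℤ) - i)
      = ∑ t ∈ range R, (if i ≤ t ∧ t ≤ i + q then zch p (v - t) * zch q ((t : ℤ) - i) else 0) := by
    apply Finset.sum_congr rfl
    intro t _
    by_cases h : i ≤ t ∧ t ≤ i + q
    · rw [if_pos h]
    · rw [if_neg h]
      rcases not_and_or.mp h with h1 | h1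
      · rw [zch_neg (p := q) (k := (t : ℤ) - i) (by push_cast; omega), mul_zero]
      · rw [zch_eq_zero_of_gt (p := q) (k := (t : ℤ) - i) (by push_cast; omega), mul_zero]
  rw [hsplit]
  rw [← Finset.sum_filter]
  have hfil : (range R).filter (fun t => i ≤ t ∧ t ≤ i + q) = Finset.Icc i (i + q) := by
    ext t
    simp [Finset.mem_filter, Finset.mem_range, Finset.mem_Icc]
    omega
  rw [hfil]
  have hmap : Finset.Icc i (i + q) = Finset.map ⟨fun k => i + k, show Function.Injective (fun k : ℕ => i + k) from fun x y h => by simpa using h⟩ (range (q + 1)) := by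
    ext t
    simp [Finset.mem_map, Finset.mem_range, Finset.mem_Icc]
    constructor
    · intro h; exact ⟨t - i, by omega, by omega⟩
    · rintro ⟨k, hk, rfl⟩; omega
  rw [hmap, Finset.sum_map]
  rw [← zch_vandermonde q p (v - i)]
  apply Finset.sum_congr rfl
  intro k _
  simp only [Function.Embedding.coeFn_mk]
  rw [show ((i + k : ℕ) : ℤ) - (i : ℤ) = (k : ℤ) from by push_cast; ring]
  rw [zch_natCast]
  rw [show v - ((i + k : ℕ) : ℤ) = (v - i) - k from by push_cast; ring]
  ring

lemma tsum_mul_walkStep (f : ℤ → ℝ) (y : ℤ) :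
    ∑' z : ℤ, f z * walkStep z y = f (y + 1) + f (y - 1) := by
  have hsupp : ∀ z : ℤ, z ∉ ({y + 1, y - 1} : Finset ℤ) → f z * walkStep z y = 0 := by
    intro z hz
    simp only [Finset.mem_insert, Finset.mem_singleton] at hz
    push_neg at hz
    unfold walkStep
    rw [if_neg (by omega), if_neg (by omega)]
    ring
  rw [tsum_eq_sum hsupp]
  rw [Finset.sum_pair (by omega : y + 1 ≠ y - 1)]
  unfold walkStep
  rw [if_pos (by ring), if_neg (by omega), if_neg (by omega), if_pos (by ring)]
  ring

lemma walkConv_eq (m : ℕ) (x y : ℤ) :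
    walkConv m x y = if (2 : ℤ) ∣ (y - x + m) then zch m ((y - x + m) / 2) else 0 := by
  induction m generalizing y with
  | zero =>
    simp only [Nat.cast_zero, add_zero]
    show (if x = y then (1:ℝ) else 0) = _
    by_cases h : x = y
    · subst h
      rw [if_pos rfl, if_pos ⟨0, by ring⟩]
      norm_num [zch]
    · rw [if_neg h]
      by_cases h2 : (2 : ℤ) ∣ (y - x)
      · rw [if_pos h2]
        obtain ⟨k, hk⟩ := h2
        rcases lt_trichotomy k 0 with hk0 | hk0 | hk0
        · rw [show (y - x) / 2 = k from by omega]
          unfold zch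
          rw [if_neg (by omega)]
        · omega
        · rw [show (y - x) / 2 = k from by omega]
          unfold zch
          rw [if_pos (by omega), Nat.choose_eq_zero_of_lt (by omega)]
          simp
      · rw [if_neg h2]
  | succ m ih =>
    show (∑' z : ℤ, walkConv m x z * walkStep z y) = _
    rw [tsum_mul_walkStep (fun z => walkConv m x z) y]
    rw [ih (y + 1), ih (y - 1)]
    have harg1 : (y + 1) - x + (m : ℤ) = y - x + ((m : ℕ) + 1 : ℕ) := by push_cast; ring
    have harg2 : (y - 1) - x + (m : ℤ) = y - x + ((m : ℕ) + 1 : ℕ) - 2 := by push_cast; ring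
    rw [harg1, harg2]
    set D : ℤ := y - x + ((m : ℕ) + 1 : ℕ) with hD
    by_cases h : (2 : ℤ) ∣ D
    · rw [if_pos (by omega : (2:ℤ) ∣ D - 2), if_pos h, if_pos h]
      rw [show (D - 2) / 2 = D / 2 - 1 from by omega]
      rw [add_comm]
      exact zch_pascal m (D / 2)
    · rw [if_neg (by omega : ¬ (2:ℤ) ∣ D - 2), if_neg h, if_neg h]
      ring

lemma invfact_neg {k : ℤ} (h : k < 0) : invfact k = 0 := by
  simp [invfact, not_le.mpr h]

lemma psiFun_eq_zero (a b c n : ℕ) (z : ℤ)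
    (hz : z ∉ (range (a + 1)).image (fun s : ℕ => 2 * (s : ℤ) - 1)) :
    psiFun a b c n z = 0 := by
  unfold psiFun
  by_cases hodd : Odd z
  · rw [if_pos hodd]
    have hσ : ¬ (0 ≤ (z + 1) / 2 ∧ (z + 1) / 2 ≤ (a : ℤ)) := by
      intro ⟨h1, h2⟩
      apply hz
      rw [Finset.mem_image]
      obtain ⟨k, hk⟩ := hodd
      refine ⟨((z + 1) / 2).toNat, ?_, ?_⟩
      · rw [Finset.mem_range]; omega
      · omega
    apply Finset.sum_eq_zero
    intro j hj
    rcases not_and_or.mp hσ with h1 | h1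
    · rw [invfact_neg (k := (z+1)/2 - j) (by omega)]
      ring
    · rw [invfact_neg (k := (a : ℤ) - (z+1)/2) (by omega)]
      ring
  · rw [if_neg hodd]

lemma gramA_finite (a b c n m : ℕ) (hn : n < a) (hm : m < a) :
    gramA a b c ⟨n, hn⟩ ⟨m, hm⟩
      = ∑ s ∈ range (a + 1), ∑ t ∈ range (a + 1),
          psiFun a b c n (2 * (s : ℤ) - 1) *
            walkConv (b + c - 2) (2 * (s : ℤ) - 1) ((c : ℤ) - (b : ℤ) + (2 * (t : ℤ) - 1)) *
            psiStarFun a b c m ((c : ℤ) - (b : ℤ) + (2 * (t : ℤ) - 1)) := by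
  have hinj : ∀ x ∈ range (a+1), ∀ y ∈ range (a+1),
      (fun s : ℕ => 2 * (s : ℤ) - 1) x = (fun s : ℕ => 2 * (s : ℤ) - 1) y → x = y := by
    intro x _ y _ h
    simp only at h
    omega
  have hinj2 : ∀ x ∈ range (a+1), ∀ y ∈ range (a+1),
      (fun t : ℕ => (c : ℤ) - (b : ℤ) + (2 * (t : ℤ) - 1)) x
        = (fun t : ℕ => (c : ℤ) - (b : ℤ) + (2 * (t : ℤ) - 1)) y → x = y := by
    intro x _ y _ h
    simp only at h
    omega
  show (∑' z : ℤ, ∑' w : ℤ,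
      psiFun a b c n z * walkConv (b + c - 2) z w * psiStarFun a b c m w) = _
  rw [tsum_eq_sum (s := (range (a + 1)).image (fun s : ℕ => 2 * (s : ℤ) - 1))
    (by
      intro z hz
      rw [psiFun_eq_zero a b c n z hz]
      simp)]
  rw [Finset.sum_image hinj]
  apply Finset.sum_congr rfl
  intro s _
  rw [tsum_eq_sum (s := (range (a + 1)).image (fun t : ℕ => (c : ℤ) - (b : ℤ) + (2 * (t : ℤ) - 1)))
    (by
      intro w hw
      have : psiStarFun a b c m w = 0 := by
        unfold psiStarFun
        apply psiFun_eq_zero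
        intro hmem
        apply hw
        rw [Finset.mem_image] at hmem ⊢
        obtain ⟨t, ht, heq⟩ := hmem
        exact ⟨t, ht, by omega⟩
      rw [this]
      ring)]
  rw [Finset.sum_image hinj2]

/-- The hypergeometric-type coefficient appearing in `psiFun`. -/
noncomputable def cR (a b c n j : ℕ) : ℝ :=
  (n.choose j : ℝ) * poch ((n : ℝ) - 2 * a - b - c + 1) j /
    (poch (-(a : ℝ) - c + 1) j * poch (-(a : ℝ)) j)

lemma psiFun_apply (a b c n s : ℕ) :
    psiFun a b c n (2 * (s : ℤ) - 1)
      = ∑ j ∈ range (n + 1), cR a b c n j * invfact ((s : ℤ) - j) * invfact ((a : ℤ) - s) := by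
  unfold psiFun
  rw [if_pos ⟨(s : ℤ) - 1, by ring⟩]
  have h2 : (2 * (s : ℤ) - 1 + 1) / 2 = (s : ℤ) := by omega
  rw [h2]
  rfl

lemma psiStar_apply (a b c m t : ℕ) :
    psiStarFun a b c m ((c : ℤ) - (b : ℤ) + (2 * (t : ℤ) - 1))
      = ∑ i ∈ range (m + 1), cR a c b m i * invfact ((t : ℤ) - i) * invfact ((a : ℤ) - t) := by
  unfold psiStarFun
  rw [show (c : ℤ) - (b : ℤ) + (2 * (t : ℤ) - 1) - ((c : ℤ) - b) = 2 * (t : ℤ) - 1 from by ring]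
  exact psiFun_apply a c b m t

lemma walkConv_middle (b c : ℕ) (hb : 1 ≤ b) (hc : 1 ≤ c) (s t : ℕ) :
    walkConv (b + c - 2) (2 * (s : ℤ) - 1) ((c : ℤ) - (b : ℤ) + (2 * (t : ℤ) - 1))
      = zch (b + c - 2) ((c : ℤ) - 1 + t - s) := by
  rw [walkConv_eq]
  have hcast : ((b + c - 2 : ℕ) : ℤ) = (b : ℤ) + c - 2 := by omega
  rw [hcast]
  have harg : (c : ℤ) - (b : ℤ) + (2 * (t : ℤ) - 1) - (2 * (s : ℤ) - 1) + ((b : ℤ) + c - 2)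
      = 2 * ((c : ℤ) - 1 + t - s) := by ring
  rw [harg, if_pos (Dvd.intro _ rfl)]
  congr 1
  omega

lemma invfact_pair (a i t : ℕ) (hi : i ≤ a) (ht : t ≤ a) :
    invfact ((t : ℤ) - i) * invfact ((a : ℤ) - t)
      = zch (a - i) ((t : ℤ) - i) * (((a - i).factorial : ℝ))⁻¹ := by
  rcases lt_or_ge t i with h | h
  · rw [invfact_neg (by omega), zch_neg (by omega)]
    ring
  · have h1 : invfact ((t : ℤ) - i) = (((t - i).factorial : ℝ))⁻¹ := by
      unfold invfact
      rw [if_pos (by omega)]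
      congr 3
      omega
    have h2 : invfact ((a : ℤ) - t) = (((a - t).factorial : ℝ))⁻¹ := by
      unfold invfact
      rw [if_pos (by omega)]
      congr 3
      omega
    have h3 : zch (a - i) ((t : ℤ) - i) = (((a - i).choose (t - i) : ℕ) : ℝ) := by
      rw [show (t : ℤ) - i = ((t - i : ℕ) : ℤ) from by omega, zch_natCast]
    rw [h1, h2, h3]
    have key : (a - i).choose (t - i) * (t - i).factorial * (a - t).factorial
        = (a - i).factorial := by
      have h4 : (a - i) - (t - i) = a - t := by omega
      have := Nat.choose_mul_factorial_mul_factorial (n := a - i) (k := t - i) (by omega)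
      rw [h4] at this
      exact this
    have hne : ∀ x : ℕ, ((x.factorial : ℕ) : ℝ) ≠ 0 := fun x => by
      exact_mod_cast x.factorial_ne_zero
    field_simp
    rw [← key]
    push_cast
    ring

lemma gramA_eval (a b c n m : ℕ) (hb : 1 ≤ b) (hc : 1 ≤ c) (hn : n < a) (hm : m < a) :
    gramA a b c ⟨n, hn⟩ ⟨m, hm⟩
      = ∑ j ∈ range (n + 1), ∑ i ∈ range (m + 1),
          cR a b c n j * cR a c b m i * zch (2 * a + b + c - 2 - i - j) ((a : ℤ) + c - 1 - j)
            * (((a - i).factorial : ℝ))⁻¹ * (((a - j).factorial : ℝ))⁻¹ := by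
  rw [gramA_finite a b c n m hn hm]
  -- expand each (s,t) summand into a double sum over j, i
  have step1 : ∀ s ∈ range (a + 1), ∀ t ∈ range (a + 1),
      psiFun a b c n (2 * (s : ℤ) - 1) *
          walkConv (b + c - 2) (2 * (s : ℤ) - 1) ((c : ℤ) - (b : ℤ) + (2 * (t : ℤ) - 1)) *
          psiStarFun a b c m ((c : ℤ) - (b : ℤ) + (2 * (t : ℤ) - 1))
        = ∑ j ∈ range (n + 1), ∑ i ∈ range (m + 1),
            cR a b c n j * cR a c b m i
              * (invfact ((s : ℤ) - j) * invfact ((a : ℤ) - s))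
              * zch (b + c - 2) ((c : ℤ) - 1 + t - s)
              * (invfact ((t : ℤ) - i) * invfact ((a : ℤ) - t)) := by
    intro s hs t ht
    rw [psiFun_apply, psiStar_apply, walkConv_middle b c hb hc s t]
    rw [Finset.sum_mul, Finset.sum_mul]
    apply Finset.sum_congr rfl
    intro j _
    rw [Finset.mul_sum]
    apply Finset.sum_congr rfl
    intro i _
    ring
  calc ∑ s ∈ range (a + 1), ∑ t ∈ range (a + 1),
        psiFun a b c n (2 * (s : ℤ) - 1) *
          walkConv (b + c - 2) (2 * (s : ℤ) - 1) ((c : ℤ) - (b : ℤ) + (2 * (t : ℤ) - 1)) *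
          psiStarFun a b c m ((c : ℤ) - (b : ℤ) + (2 * (t : ℤ) - 1))
      = ∑ s ∈ range (a + 1), ∑ t ∈ range (a + 1), ∑ j ∈ range (n + 1), ∑ i ∈ range (m + 1),
          cR a b c n j * cR a c b m i
            * (invfact ((s : ℤ) - j) * invfact ((a : ℤ) - s))
            * zch (b + c - 2) ((c : ℤ) - 1 + t - s)
            * (invfact ((t : ℤ) - i) * invfact ((a : ℤ) - t)) := by
        apply Finset.sum_congr rfl
        intro s hs
        apply Finset.sum_congr rfl
        intro t ht
        exact step1 s hs t ht
    _ = ∑ s ∈ range (a + 1), ∑ j ∈ range (n + 1), ∑ t ∈ range (a + 1), ∑ i ∈ range (m + 1),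
          cR a b c n j * cR a c b m i
            * (invfact ((s : ℤ) - j) * invfact ((a : ℤ) - s))
            * zch (b + c - 2) ((c : ℤ) - 1 + t - s)
            * (invfact ((t : ℤ) - i) * invfact ((a : ℤ) - t)) := by
        apply Finset.sum_congr rfl
        intro s _
        exact Finset.sum_comm
    _ = ∑ j ∈ range (n + 1), ∑ s ∈ range (a + 1), ∑ t ∈ range (a + 1), ∑ i ∈ range (m + 1),
          cR a b c n j * cR a c b m i
            * (invfact ((s : ℤ) - j) * invfact ((a : ℤ) - s))
            * zch (b + c - 2) ((c : ℤ) - 1 + t - s)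
            * (invfact ((t : ℤ) - i) * invfact ((a : ℤ) - t)) := Finset.sum_comm
    _ = ∑ j ∈ range (n + 1), ∑ s ∈ range (a + 1), ∑ i ∈ range (m + 1), ∑ t ∈ range (a + 1),
          cR a b c n j * cR a c b m i
            * (invfact ((s : ℤ) - j) * invfact ((a : ℤ) - s))
            * zch (b + c - 2) ((c : ℤ) - 1 + t - s)
            * (invfact ((t : ℤ) - i) * invfact ((a : ℤ) - t)) := by
        apply Finset.sum_congr rfl
        intro j _
        apply Finset.sum_congr rfl
        intro s _
        exact Finset.sum_comm
    _ = ∑ j ∈ range (n + 1), ∑ i ∈ range (m + 1), ∑ s ∈ range (a + 1), ∑ t ∈ range (a + 1),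
          cR a b c n j * cR a c b m i
            * (invfact ((s : ℤ) - j) * invfact ((a : ℤ) - s))
            * zch (b + c - 2) ((c : ℤ) - 1 + t - s)
            * (invfact ((t : ℤ) - i) * invfact ((a : ℤ) - t)) := by
        apply Finset.sum_congr rfl
        intro j _
        exact Finset.sum_comm
    _ = ∑ j ∈ range (n + 1), ∑ i ∈ range (m + 1),
          cR a b c n j * cR a c b m i * zch (2 * a + b + c - 2 - i - j) ((a : ℤ) + c - 1 - j)
            * (((a - i).factorial : ℝ))⁻¹ * (((a - j).factorial : ℝ))⁻¹ := by
        apply Finset.sum_congr rfl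
        intro j hj
        apply Finset.sum_congr rfl
        intro i hi
        rw [Finset.mem_range] at hj hi
        have hja : j ≤ a := by omega
        have hia : i ≤ a := by omega
        -- first do the t-sum for each s
        have tsum : ∀ s : ℕ, s ∈ range (a+1) →
            ∑ t ∈ range (a + 1),
              cR a b c n j * cR a c b m i
                * (invfact ((s : ℤ) - j) * invfact ((a : ℤ) - s))
                * zch (b + c - 2) ((c : ℤ) - 1 + t - s)
                * (invfact ((t : ℤ) - i) * invfact ((a : ℤ) - t))
            = cR a b c n j * cR a c b m i
                * (invfact ((s : ℤ) - j) * invfact ((a : ℤ) - s))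
                * (zch (a + b + c - 2 - i) ((b : ℤ) - 1 + s - i) * (((a - i).factorial : ℝ))⁻¹) := by
          intro s hs
          have flip : ∀ t : ℕ, zch (b + c - 2) ((c : ℤ) - 1 + t - s)
              = zch (b + c - 2) (((b : ℤ) - 1 + s) - t) := by
            intro t
            rw [zch_symm]
            congr 1
            have : ((b + c - 2 : ℕ) : ℤ) = (b : ℤ) + c - 2 := by omega
            rw [this]
            ring
          have key : ∑ t ∈ range (a + 1),
              zch (b + c - 2) (((b : ℤ) - 1 + s) - t) * zch (a - i) ((t : ℤ) - i)
              = zch ((b + c - 2) + (a - i)) (((b : ℤ) - 1 + s) - i) :=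
            zch_vandermonde' (b + c - 2) (a - i) ((b : ℤ) - 1 + s) i (a + 1) (by omega)
          have hidx : (b + c - 2) + (a - i) = a + b + c - 2 - i := by omega
          rw [hidx] at key
          calc ∑ t ∈ range (a + 1),
              cR a b c n j * cR a c b m i
                * (invfact ((s : ℤ) - j) * invfact ((a : ℤ) - s))
                * zch (b + c - 2) ((c : ℤ) - 1 + t - s)
                * (invfact ((t : ℤ) - i) * invfact ((a : ℤ) - t))
              = cR a b c n j * cR a c b m i
                * (invfact ((s : ℤ) - j) * invfact ((a : ℤ) - s)) * (((a - i).factorial : ℝ))⁻¹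
                * ∑ t ∈ range (a + 1),
                    zch (b + c - 2) (((b : ℤ) - 1 + s) - t) * zch (a - i) ((t : ℤ) - i) := by
                rw [Finset.mul_sum]
                apply Finset.sum_congr rfl
                intro t ht
                rw [Finset.mem_range] at ht
                rw [invfact_pair a i t hia (by omega), flip t]
                ring
            _ = _ := by
                rw [key]
                ring
        rw [Finset.sum_congr rfl tsum]
        -- now the s-sum
        have flip2 : ∀ s : ℕ, zch (a + b + c - 2 - i) ((b : ℤ) - 1 + s - i)
            = zch (a + b + c - 2 - i) (((a : ℤ) + c - 1) - s) := by
          intro s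
          rw [zch_symm]
          congr 1
          have : ((a + b + c - 2 - i : ℕ) : ℤ) = (a : ℤ) + b + c - 2 - i := by omega
          rw [this]
          ring
        have key2 : ∑ s ∈ range (a + 1),
            zch (a + b + c - 2 - i) (((a : ℤ) + c - 1) - s) * zch (a - j) ((s : ℤ) - j)
            = zch ((a + b + c - 2 - i) + (a - j)) (((a : ℤ) + c - 1) - j) :=
          zch_vandermonde' (a + b + c - 2 - i) (a - j) ((a : ℤ) + c - 1) j (a + 1) (by omega)
        have hidx2 : (a + b + c - 2 - i) + (a - j) = 2 * a + b + c - 2 - i - j := by omega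
        rw [hidx2] at key2
        calc ∑ s ∈ range (a + 1),
            cR a b c n j * cR a c b m i
              * (invfact ((s : ℤ) - j) * invfact ((a : ℤ) - s))
              * (zch (a + b + c - 2 - i) ((b : ℤ) - 1 + s - i) * (((a - i).factorial : ℝ))⁻¹)
            = cR a b c n j * cR a c b m i * (((a - i).factorial : ℝ))⁻¹ * (((a - j).factorial : ℝ))⁻¹
              * ∑ s ∈ range (a + 1),
                  zch (a + b + c - 2 - i) (((a : ℤ) + c - 1) - s) * zch (a - j) ((s : ℤ) - j) := by
              rw [Finset.mul_sum]
              apply Finset.sum_congr rfl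
              intro s hs
              rw [Finset.mem_range] at hs
              rw [invfact_pair a j s hja (by omega), flip2 s]
              ring
          _ = _ := by
              rw [key2]
              ring

lemma poch_neg_nat (K : ℕ) : ∀ (j : ℕ), j ≤ K →
    poch (-(K : ℝ)) j = (-1) ^ j * (K.descFactorial j : ℝ) := by
  intro j
  induction j with
  | zero => intro _; simp [poch]
  | succ j ih =>
    intro hj
    unfold poch at ih ⊢
    rw [Finset.prod_range_succ, ih (by omega)]
    rw [Nat.descFactorial_succ]
    have : (-(K : ℝ) + j) = -((K - j : ℕ) : ℝ) := by
      have : ((K - j : ℕ) : ℝ) = (K : ℝ) - j := by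
        push_cast [Nat.cast_sub (by omega : j ≤ K)]
        ring
      rw [this]
      ring
    rw [this]
    push_cast
    ring

/-- The integer-valued double sum at the heart of the Gram matrix. -/
noncomputable def Fint (a b c n m : ℕ) : ℤ :=
  ∑ j ∈ range (n + 1), ∑ i ∈ range (m + 1),
    (-1) ^ (i + j) * (n.choose j : ℤ) * (m.choose i : ℤ)
      * ((2 * a + b + c - 1 - n).descFactorial j : ℤ)
      * ((2 * a + b + c - 1 - m).descFactorial i : ℤ)
      * ((2 * a + b + c - 2 - i - j).factorial : ℤ)

set_option maxHeartbeats 2000000 in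
lemma gramA_entry_aux (a b c n m : ℕ) (hb : 1 ≤ b) (hc : 1 ≤ c) (hn : n < a) (hm : m < a)
    (hMain : gramA' = ∑ j ∈ range (n + 1), ∑ i ∈ range (m + 1),
          cR a b c n j * cR a c b m i * zch (2 * a + b + c - 2 - i - j) ((a : ℤ) + c - 1 - j)
            * (((a - i).factorial : ℝ))⁻¹ * (((a - j).factorial : ℝ))⁻¹) :
    gramA' = (Fint a b c n m : ℝ)
        / (((a.factorial : ℝ)) ^ 2 * ((a + b - 1).factorial : ℝ) * ((a + c - 1).factorial : ℝ)) := by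
  rw [hMain]
  unfold Fint
  rw [Int.cast_sum, Finset.sum_div]
  apply Finset.sum_congr rfl
  intro j hj
  rw [Int.cast_sum, Finset.sum_div]
  apply Finset.sum_congr rfl
  intro i hi
  rw [Finset.mem_range] at hj hi
  push_cast only [Int.cast_mul, Int.cast_pow, Int.cast_neg, Int.cast_one, Int.cast_natCast]
  have hja : j ≤ n := by omega
  have hia : i ≤ m := by omega
  -- evaluate the three pochhammer factors in each cR
  have ecast : ∀ k : ℕ, k ≤ 2 * a + b + c - 1 →
      ((2 * a + b + c - 1 - k : ℕ) : ℝ) = 2 * (a : ℝ) + b + c - 1 - k := by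
    intro k hk
    rw [Nat.cast_sub hk, Nat.cast_sub (by omega : 1 ≤ 2 * a + b + c)]
    push_cast
    ring
  have hp1 : poch ((n : ℝ) - 2 * a - b - c + 1) j
      = (-1) ^ j * ((2 * a + b + c - 1 - n).descFactorial j : ℝ) := by
    rw [show (n : ℝ) - 2 * a - b - c + 1 = -(((2 * a + b + c - 1 - n : ℕ)) : ℝ) from by
      rw [ecast n (by omega)]; ring]
    exact poch_neg_nat _ j (by omega)
  have hp1' : poch ((m : ℝ) - 2 * a - c - b + 1) i
      = (-1) ^ i * ((2 * a + b + c - 1 - m).descFactorial i : ℝ) := by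
    rw [show (m : ℝ) - 2 * a - c - b + 1 = -(((2 * a + b + c - 1 - m : ℕ)) : ℝ) from by
      rw [ecast m (by omega)]; ring]
    exact poch_neg_nat _ i (by omega)
  have hp2 : poch (-(a : ℝ) - c + 1) j = (-1) ^ j * ((a + c - 1).descFactorial j : ℝ) := by
    rw [show -(a : ℝ) - c + 1 = -(((a + c - 1 : ℕ)) : ℝ) from by
      rw [Nat.cast_sub (by omega : 1 ≤ a + c)]; push_cast; ring]
    exact poch_neg_nat _ j (by omega)
  have hp2' : poch (-(a : ℝ) - b + 1) i = (-1) ^ i * ((a + b - 1).descFactorial i : ℝ) := by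
    rw [show -(a : ℝ) - b + 1 = -(((a + b - 1 : ℕ)) : ℝ) from by
      rw [Nat.cast_sub (by omega : 1 ≤ a + b)]; push_cast; ring]
    exact poch_neg_nat _ i (by omega)
  have hp3 : poch (-(a : ℝ)) j = (-1) ^ j * (a.descFactorial j : ℝ) := poch_neg_nat a j (by omega)
  have hp3' : poch (-(a : ℝ)) i = (-1) ^ i * (a.descFactorial i : ℝ) := poch_neg_nat a i (by omega)
  have hz : zch (2 * a + b + c - 2 - i - j) ((a : ℤ) + c - 1 - j)
      = (((2 * a + b + c - 2 - i - j).choose (a + c - 1 - j) : ℕ) : ℝ) := by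
    rw [show (a : ℤ) + c - 1 - j = (((a + c - 1 - j : ℕ)) : ℤ) from by
      rw [Nat.cast_sub (by omega : j ≤ a + c - 1), Nat.cast_sub (by omega : 1 ≤ a + c)]
      push_cast
      ring]
    exact zch_natCast _ _
  unfold cR
  rw [hp1, hp1', hp2, hp2', hp3, hp3', hz]
  -- now a pure algebraic identity with factorial/descFactorial/choose atoms
  have hA : (((a + c - 1).descFactorial j : ℕ) : ℝ) * (((a + c - 1 - j).factorial : ℕ) : ℝ)
      = (((a + c - 1).factorial : ℕ) : ℝ) := by
    rw [mul_comm]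
    exact_mod_cast congrArg (Nat.cast : ℕ → ℝ)
      (Nat.factorial_mul_descFactorial (by omega : j ≤ a + c - 1))
  have hB : ((a.descFactorial j : ℕ) : ℝ) * (((a - j).factorial : ℕ) : ℝ)
      = ((a.factorial : ℕ) : ℝ) := by
    rw [mul_comm]
    exact_mod_cast congrArg (Nat.cast : ℕ → ℝ)
      (Nat.factorial_mul_descFactorial (by omega : j ≤ a))
  have hB' : ((a.descFactorial i : ℕ) : ℝ) * (((a - i).factorial : ℕ) : ℝ)
      = ((a.factorial : ℕ) : ℝ) := by
    rw [mul_comm]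
    exact_mod_cast congrArg (Nat.cast : ℕ → ℝ)
      (Nat.factorial_mul_descFactorial (by omega : i ≤ a))
  have hC : (((a + b - 1).descFactorial i : ℕ) : ℝ) * (((a + b - 1 - i).factorial : ℕ) : ℝ)
      = (((a + b - 1).factorial : ℕ) : ℝ) := by
    rw [mul_comm]
    exact_mod_cast congrArg (Nat.cast : ℕ → ℝ)
      (Nat.factorial_mul_descFactorial (by omega : i ≤ a + b - 1))
  have hZ : (((2 * a + b + c - 2 - i - j).choose (a + c - 1 - j) : ℕ) : ℝ)
        * (((a + c - 1 - j).factorial : ℕ) : ℝ) * (((a + b - 1 - i).factorial : ℕ) : ℝ)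
      = (((2 * a + b + c - 2 - i - j).factorial : ℕ) : ℝ) := by
    have h4 : (2 * a + b + c - 2 - i - j) - (a + c - 1 - j) = a + b - 1 - i := by omega
    have := Nat.choose_mul_factorial_mul_factorial
      (n := 2 * a + b + c - 2 - i - j) (k := a + c - 1 - j) (by omega)
    rw [h4] at this
    exact_mod_cast congrArg (Nat.cast : ℕ → ℝ) this
  have hfac : ∀ x : ℕ, ((x.factorial : ℕ) : ℝ) ≠ 0 := fun x => by
    exact_mod_cast x.factorial_ne_zero
  have hdF : ∀ (K x : ℕ), x ≤ K → ((K.descFactorial x : ℕ) : ℝ) ≠ 0 := fun K x h => by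
    have := (Nat.descFactorial_eq_zero_iff_lt (n := K) (k := x)).not
    exact_mod_cast fun h0 => (by omega : ¬ K < x) (by
      exact (Nat.descFactorial_eq_zero_iff_lt).mp (by exact_mod_cast h0))
  have hne1 : (((a + c - 1).descFactorial j : ℕ) : ℝ) ≠ 0 := hdF _ _ (by omega)
  have hne2 : ((a.descFactorial j : ℕ) : ℝ) ≠ 0 := hdF _ _ (by omega)
  have hne3 : (((a + b - 1).descFactorial i : ℕ) : ℝ) ≠ 0 := hdF _ _ (by omega)
  have hne4 : ((a.descFactorial i : ℕ) : ℝ) ≠ 0 := hdF _ _ (by omega)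
  have hne5 : (((a - i).factorial : ℕ) : ℝ) ≠ 0 := hfac _
  have hne6 : (((a - j).factorial : ℕ) : ℝ) ≠ 0 := hfac _
  have hne7 : (((a + c - 1 - j).factorial : ℕ) : ℝ) ≠ 0 := hfac _
  have hne8 : (((a + b - 1 - i).factorial : ℕ) : ℝ) ≠ 0 := hfac _
  rw [← hZ, ← hA, ← hC]
  rw [sq]
  nth_rewrite 1 [← hB]
  nth_rewrite 1 [← hB']
  rw [pow_add]
  rcases Nat.even_or_odd j with hpar | hpar <;>
    rcases Nat.even_or_odd i with hpar2 | hpar2 <;>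
      simp only [hpar.neg_one_pow, hpar2.neg_one_pow] <;>
        field_simp <;> ring

lemma dF_fact_eq (Q r j : ℕ) (hj : j ≤ Q) :
    (Q.descFactorial j) * ((Q + r - j).factorial)
      = Q.factorial * r.factorial * ((Q + r - j).choose r) := by
  have h1 : ((Q + r - j).choose r) * r.factorial * (Q - j).factorial = (Q + r - j).factorial := by
    have h2 : (Q + r - j) - r = Q - j := by omega
    have := Nat.choose_mul_factorial_mul_factorial (n := Q + r - j) (k := r) (by omega)
    rw [h2] at this
    exact this
  have h3 : (Q - j).factorial * Q.descFactorial j = Q.factorial :=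
    Nat.factorial_mul_descFactorial hj
  calc Q.descFactorial j * (Q + r - j).factorial
      = Q.descFactorial j * ((Q + r - j).choose r * r.factorial * (Q - j).factorial) := by rw [h1]
    _ = ((Q - j).factorial * Q.descFactorial j) * r.factorial * ((Q + r - j).choose r) := by ring
    _ = _ := by rw [h3]

lemma inner_vanish (n Q r : ℕ) (hr : r < n) (hn : n ≤ Q) :
    ∑ j ∈ range (n + 1),
      (-1 : ℤ) ^ j * (n.choose j : ℤ) * (Q.descFactorial j : ℤ) * ((Q + r - j).factorial : ℤ)
      = 0 := by
  have step : ∀ j ∈ range (n + 1),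
      (-1 : ℤ) ^ j * (n.choose j : ℤ) * (Q.descFactorial j : ℤ) * ((Q + r - j).factorial : ℤ)
        = ((Q.factorial : ℤ) * (r.factorial : ℤ)) *
            ((-1 : ℤ) ^ j * (n.choose j : ℤ) * ((((Q + r) - j).choose r : ℕ) : ℤ)) := by
    intro j hj
    rw [Finset.mem_range] at hj
    have := dF_fact_eq Q r j (by omega)
    have hcast : (Q.descFactorial j : ℤ) * ((Q + r - j).factorial : ℤ)
        = (Q.factorial : ℤ) * (r.factorial : ℤ) * (((Q + r - j).choose r : ℕ) : ℤ) := by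
      exact_mod_cast congrArg (Nat.cast : ℕ → ℤ) this
    calc (-1 : ℤ) ^ j * (n.choose j : ℤ) * (Q.descFactorial j : ℤ) * ((Q + r - j).factorial : ℤ)
        = (-1 : ℤ) ^ j * (n.choose j : ℤ) * ((Q.descFactorial j : ℤ) * ((Q + r - j).factorial : ℤ)) := by ring
      _ = (-1 : ℤ) ^ j * (n.choose j : ℤ) * ((Q.factorial : ℤ) * (r.factorial : ℤ) * (((Q + r - j).choose r : ℕ) : ℤ)) := by rw [hcast]
      _ = _ := by ring
  rw [Finset.sum_congr rfl step, ← Finset.mul_sum]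
  rw [alt_choose_vanish n (Q + r) r hr (by omega)]
  ring

lemma Fint_offdiag (a b c n m : ℕ) (hb : 1 ≤ b) (hc : 1 ≤ c) (hn : n < a) (hm : m < a)
    (hnm : n ≠ m) : Fint a b c n m = 0 := by
  unfold Fint
  rcases Nat.lt_or_ge m n with hlt | hge
  · -- m < n : swap and vanish in j
    rw [Finset.sum_comm]
    apply Finset.sum_eq_zero
    intro i hi
    rw [Finset.mem_range] at hi
    have key := inner_vanish n (2 * a + b + c - 1 - n) (n - 1 - i) (by omega) (by omega)
    have step : ∀ j ∈ range (n + 1),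
        (-1 : ℤ) ^ (i + j) * (n.choose j : ℤ) * (m.choose i : ℤ)
          * ((2 * a + b + c - 1 - n).descFactorial j : ℤ)
          * ((2 * a + b + c - 1 - m).descFactorial i : ℤ)
          * ((2 * a + b + c - 2 - i - j).factorial : ℤ)
        = ((-1 : ℤ) ^ i * (m.choose i : ℤ) * ((2 * a + b + c - 1 - m).descFactorial i : ℤ)) *
            ((-1 : ℤ) ^ j * (n.choose j : ℤ) * ((2 * a + b + c - 1 - n).descFactorial j : ℤ)
              * ((((2 * a + b + c - 1 - n) + (n - 1 - i) - j).factorial : ℕ) : ℤ)) := by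
      intro j hj
      rw [Finset.mem_range] at hj
      rw [show (2 * a + b + c - 1 - n) + (n - 1 - i) - j = 2 * a + b + c - 2 - i - j from by omega]
      rw [pow_add]
      ring
    rw [Finset.sum_congr rfl step, ← Finset.mul_sum, key]
    ring
  · have hlt : n < m := by omega
    apply Finset.sum_eq_zero
    intro j hj
    rw [Finset.mem_range] at hj
    have key := inner_vanish m (2 * a + b + c - 1 - m) (m - 1 - j) (by omega) (by omega)
    have step : ∀ i ∈ range (m + 1),
        (-1 : ℤ) ^ (i + j) * (n.choose j : ℤ) * (m.choose i : ℤ)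
          * ((2 * a + b + c - 1 - n).descFactorial j : ℤ)
          * ((2 * a + b + c - 1 - m).descFactorial i : ℤ)
          * ((2 * a + b + c - 2 - i - j).factorial : ℤ)
        = ((-1 : ℤ) ^ j * (n.choose j : ℤ) * ((2 * a + b + c - 1 - n).descFactorial j : ℤ)) *
            ((-1 : ℤ) ^ i * (m.choose i : ℤ) * ((2 * a + b + c - 1 - m).descFactorial i : ℤ)
              * ((((2 * a + b + c - 1 - m) + (m - 1 - j) - i).factorial : ℕ) : ℤ)) := by
      intro i hi
      rw [Finset.mem_range] at hi
      rw [show (2 * a + b + c - 1 - m) + (m - 1 - j) - i = 2 * a + b + c - 2 - i - j from by omega]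
      rw [pow_add]
      ring
    rw [Finset.sum_congr rfl step, ← Finset.mul_sum, key]
    ring

lemma Fint_diag (a b c n : ℕ) (hb : 1 ≤ b) (hc : 1 ≤ c) (hn : n < a) :
    Fint a b c n n
      = (n.factorial : ℤ) * ((2 * a + b + c - 1 - n).descFactorial n : ℤ)
          * ((2 * a + b + c - 2 - 2 * n).factorial : ℤ) := by
  unfold Fint
  rw [Finset.sum_range_succ]
  have hzero : ∀ j ∈ range n,
      ∑ i ∈ range (n + 1),
        (-1 : ℤ) ^ (i + j) * (n.choose j : ℤ) * (n.choose i : ℤ)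
          * ((2 * a + b + c - 1 - n).descFactorial j : ℤ)
          * ((2 * a + b + c - 1 - n).descFactorial i : ℤ)
          * ((2 * a + b + c - 2 - i - j).factorial : ℤ) = 0 := by
    intro j hj
    rw [Finset.mem_range] at hj
    have key := inner_vanish n (2 * a + b + c - 1 - n) (n - 1 - j) (by omega) (by omega)
    have step : ∀ i ∈ range (n + 1),
        (-1 : ℤ) ^ (i + j) * (n.choose j : ℤ) * (n.choose i : ℤ)
          * ((2 * a + b + c - 1 - n).descFactorial j : ℤ)
          * ((2 * a + b + c - 1 - n).descFactorial i : ℤ)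
          * ((2 * a + b + c - 2 - i - j).factorial : ℤ)
        = ((-1 : ℤ) ^ j * (n.choose j : ℤ) * ((2 * a + b + c - 1 - n).descFactorial j : ℤ)) *
            ((-1 : ℤ) ^ i * (n.choose i : ℤ) * ((2 * a + b + c - 1 - n).descFactorial i : ℤ)
              * ((((2 * a + b + c - 1 - n) + (n - 1 - j) - i).factorial : ℕ) : ℤ)) := by
      intro i hi
      rw [Finset.mem_range] at hi
      rw [show (2 * a + b + c - 1 - n) + (n - 1 - j) - i = 2 * a + b + c - 2 - i - j from by omega]
      rw [pow_add]
      ring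
    rw [Finset.sum_congr rfl step, ← Finset.mul_sum, key]
    ring
  rw [Finset.sum_eq_zero hzero, zero_add]
  -- remaining: j = n term
  have key := alt_diag_value n (2 * a + b + c - 1 - n) (by omega)
  have step : ∀ i ∈ range (n + 1),
      (-1 : ℤ) ^ (i + n) * (n.choose n : ℤ) * (n.choose i : ℤ)
        * ((2 * a + b + c - 1 - n).descFactorial n : ℤ)
        * ((2 * a + b + c - 1 - n).descFactorial i : ℤ)
        * ((2 * a + b + c - 2 - i - n).factorial : ℤ)
      = ((-1 : ℤ) ^ n * ((2 * a + b + c - 1 - n).descFactorial n : ℤ)) *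
          ((-1 : ℤ) ^ i * (n.choose i : ℤ) * ((2 * a + b + c - 1 - n).descFactorial i : ℤ)
            * ((((2 * a + b + c - 1 - n) - 1 - i).factorial : ℕ) : ℤ)) := by
    intro i hi
    rw [Finset.mem_range] at hi
    rw [show (2 * a + b + c - 1 - n) - 1 - i = 2 * a + b + c - 2 - i - n from by omega]
    rw [Nat.choose_self, pow_add]
    push_cast
    ring
  rw [Finset.sum_congr rfl step, ← Finset.mul_sum]
  have keyform : ∑ i ∈ range (n + 1),
      (-1 : ℤ) ^ i * (n.choose i : ℤ) * ((2 * a + b + c - 1 - n).descFactorial i : ℤ)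
        * ((((2 * a + b + c - 1 - n) - 1 - i).factorial : ℕ) : ℤ)
      = (-1) ^ n * (n.factorial : ℤ) * ((((2 * a + b + c - 1 - n) - 1 - n).factorial : ℕ) : ℤ) := key
  rw [keyform]
  rw [show (2 * a + b + c - 1 - n) - 1 - n = 2 * a + b + c - 2 - 2 * n from by omega]
  rcases Nat.even_or_odd n with hpar | hpar <;>
    simp only [hpar.neg_one_pow, Odd.neg_one_pow] <;> ring


lemma gramA_entry (a b c n m : ℕ) (hb : 1 ≤ b) (hc : 1 ≤ c) (hn : n < a) (hm : m < a) :
    gramA a b c ⟨n, hn⟩ ⟨m, hm⟩ = (Fint a b c n m : ℝ)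
        / (((a.factorial : ℝ)) ^ 2 * ((a + b - 1).factorial : ℝ) * ((a + c - 1).factorial : ℝ)) :=
  gramA_entry_aux a b c n m hb hc hn hm (gramA_eval a b c n m hb hc hn hm)

/-- The diagonal Gram entries `A_{nn} = C_n(a,b,c)^{-1}` and the resulting
determinant formula for `det A`. -/
theorem gram_matrix_entries_and_det (a b c : ℕ) (ha : 0 < a) (hb : 0 < b) (hbc : b ≤ c) :
    (∀ n : Fin a, gramA a b c n n = (hahnC a b c n)⁻¹) ∧
      (gramA a b c).det
        = ∏ n ∈ Finset.range a,
            ((Nat.factorial n : ℝ) * (Nat.factorial (2 * a + b + c - n - 1) : ℝ)) /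
              ((Nat.factorial (a + b - 1) : ℝ) * (Nat.factorial (a + c - 1) : ℝ) *
                ((2 * a + b + c - 2 * n - 1 : ℕ) : ℝ) * ((Nat.factorial a : ℝ)) ^ 2) := by

  have hc : 1 ≤ c := le_trans hb hbc
  have hfacpos : ∀ x : ℕ, (0 : ℝ) < ((x.factorial : ℕ) : ℝ) := fun x => by
    exact_mod_cast x.factorial_pos
  have hdiag : ∀ (n : ℕ) (hn : n < a),
      gramA a b c ⟨n, hn⟩ ⟨n, hn⟩ = (hahnC a b c n)⁻¹ := by
    intro n hn
    rw [gramA_entry a b c n n hb hc hn hn, Fint_diag a b c n hb hc hn]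
    unfold hahnC
    rw [inv_div]
    have hkey : (2 * a + b + c - 1 - n).descFactorial n * (2 * a + b + c - 2 - 2 * n).factorial
        * (2 * a + b + c - 2 * n - 1) = (2 * a + b + c - n - 1).factorial := by
      have h1 : 2 * a + b + c - 2 - 2 * n = (2 * a + b + c - 1 - n) - 1 - n := by omega
      have h2 : 2 * a + b + c - 2 * n - 1 = (2 * a + b + c - 1 - n) - n := by omega
      have h3 : 2 * a + b + c - n - 1 = 2 * a + b + c - 1 - n := by omega
      rw [h1, h2, h3]
      set Q := 2 * a + b + c - 1 - n with hQ
      have h4 : Q - n = (Q - 1 - n) + 1 := by omega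
      calc Q.descFactorial n * (Q - 1 - n).factorial * (Q - n)
          = (Q - n) * (Q - 1 - n).factorial * Q.descFactorial n := by ring
        _ = (Q - n).factorial * Q.descFactorial n := by
            rw [h4, Nat.factorial_succ]
        _ = Q.factorial := Nat.factorial_mul_descFactorial (by omega)
    rw [div_eq_div_iff (by positivity) (by
      have : (0 : ℝ) < ((2 * a + b + c - 2 * n - 1 : ℕ) : ℝ) := by
        exact_mod_cast (by omega : 0 < 2 * a + b + c - 2 * n - 1)
      positivity)]
    have hcast := congrArg (Nat.cast : ℕ → ℝ) hkey
    push_cast at hcast ⊢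
    linear_combination ((n.factorial : ℝ) * ((a + b - 1).factorial : ℝ)
      * ((a + c - 1).factorial : ℝ) * ((a.factorial : ℝ)) ^ 2) * hcast
  have hdiagFin : ∀ n : Fin a, gramA a b c n n = (hahnC a b c n)⁻¹ := by
    intro n
    rcases n with ⟨n, hn⟩
    exact hdiag n hn
  refine ⟨hdiagFin, ?_⟩
  have hdiagonal : gramA a b c = Matrix.diagonal (fun n : Fin a => (hahnC a b c n)⁻¹) := by
    ext i j
    by_cases hij : i = j
    · subst hij
      rw [hdiagFin i]
      simp [Matrix.diagonal]
    · rcases i with ⟨i, hi⟩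
      rcases j with ⟨j, hj⟩
      have hne : i ≠ j := fun h => hij (by simp [h])
      rw [Matrix.diagonal_apply_ne _ hij]
      rw [gramA_entry a b c i j hb hc hi hj, Fint_offdiag a b c i j hb hc hi hj hne]
      simp
  rw [hdiagonal, Matrix.det_diagonal]
  rw [Fin.prod_univ_eq_prod_range (fun n => (hahnC a b c n)⁻¹) a]
  apply Finset.prod_congr rfl
  intro n _
  unfold hahnC
  rw [inv_div]
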